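/- Let (X, F) be a measurable space, μ : F → [0,1] a monotone measure, p, q ≥ 1, and let f, g, h : X → [0,1] be measurable functions such that f, g are comonotone and f, h are comonotone. Then for every A ∈ F, ((S)∫_A f dμ)² · ((S)∫_A g dμ) · ((S)∫_A h dμ) ≤ ((S)∫_A f^p g^p dμ)^{1/p} · ((S)∫_A f^q h^q dμ)^{1/q}. -/

import Mathlib

/-- The Sugeno integral of a `[0,1]`-valued function `f` on `A` with respect to
a `[0,1]`-valued monotone measure `μ`:
`(S)∫_A f dμ = sup_{α ∈ [0,1]} min(α, μ(A ∩ {f ≥ α}))`. -/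
noncomputable def sugeno01 {X : Type*} (μ : Set X → ℝ) (f : X → ℝ)
    (A : Set X) : ℝ :=
  ⨆ α : Set.Icc (0:ℝ) 1, min α.1 (μ (A ∩ {x | α.1 ≤ f x}))

lemma sugeno01_bdd {X : Type*} (μ : Set X → ℝ) (f : X → ℝ) (A : Set X) :
    BddAbove (Set.range fun α : Set.Icc (0:ℝ) 1 =>
      min α.1 (μ (A ∩ {x | α.1 ≤ f x}))) := by
  refine ⟨1, ?_⟩
  rintro _ ⟨α, rfl⟩
  exact le_trans (min_le_left _ _) α.2.2

lemma sugeno01_le_one {X : Type*} (μ : Set X → ℝ) (f : X → ℝ) (A : Set X) :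
    sugeno01 μ f A ≤ 1 :=
  ciSup_le fun α => le_trans (min_le_left _ _) α.2.2

lemma sugeno01_nonneg {X : Type*} [MeasurableSpace X] (μ : Set X → ℝ)
    (hμY : ∀ B : Set X, MeasurableSet B → μ B ∈ Set.Icc (0:ℝ) 1)
    (f : X → ℝ) (hf : Measurable f) (A : Set X) (hA : MeasurableSet A) :
    0 ≤ sugeno01 μ f A := by
  have h := le_ciSup (sugeno01_bdd μ f A) ⟨(0:ℝ), by norm_num⟩
  have h0 : (0:ℝ) ≤ μ (A ∩ {x | (0:ℝ) ≤ f x}) :=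
    (hμY _ (hA.inter (hf measurableSet_Ici))).1
  unfold sugeno01; simpa [min_eq_left h0] using h

/-- If `t` is below the Sugeno integral, then `μ (A ∩ {t ≤ f}) > t`. -/
lemma sugeno01_lt_level {X : Type*} [MeasurableSpace X] (μ : Set X → ℝ)
    (hμmono : ∀ A B : Set X, MeasurableSet A → MeasurableSet B → A ⊆ B → μ A ≤ μ B)
    (f : X → ℝ) (hf : Measurable f) (A : Set X) (hA : MeasurableSet A)
    (t : ℝ) (ht : t < sugeno01 μ f A) :
    t < μ (A ∩ {x | t ≤ f x}) := by
  rw [sugeno01, lt_ciSup_iff (sugeno01_bdd μ f A)] at ht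
  obtain ⟨α, hα⟩ := ht
  rw [lt_min_iff] at hα
  refine hα.2.trans_le (hμmono _ _ ?_ ?_ ?_)
  · exact hA.inter (hf measurableSet_Ici)
  · exact hA.inter (hf measurableSet_Ici)
  · exact Set.inter_subset_inter_right _ fun x hx => le_trans hα.1.le hx

/-- Main step: for comonotone `f, g`, levels strictly below the Sugeno integrals
multiply below the `p`-norm of the Sugeno integral of `f^p g^p`. -/
lemma sugeno01_key {X : Type*} [MeasurableSpace X] (μ : Set X → ℝ)
    (hμY : ∀ A : Set X, MeasurableSet A → μ A ∈ Set.Icc (0:ℝ) 1)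
    (hμmono : ∀ A B : Set X, MeasurableSet A → MeasurableSet B → A ⊆ B → μ A ≤ μ B)
    (p : ℝ) (hp : 1 ≤ p)
    (f g : X → ℝ) (hf : Measurable f) (hg : Measurable g)
    (hfY : ∀ x, f x ∈ Set.Icc (0:ℝ) 1) (hgY : ∀ x, g x ∈ Set.Icc (0:ℝ) 1)
    (hfg : ∀ x y, 0 ≤ (f x - f y) * (g x - g y))
    (A : Set X) (hA : MeasurableSet A)
    (s t : ℝ) (hs0 : 0 ≤ s) (ht0 : 0 ≤ t)
    (hs : s < sugeno01 μ f A) (ht : t < sugeno01 μ g A) :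
    s * t ≤ (sugeno01 μ (fun x => f x ^ p * g x ^ p) A) ^ (1/p) := by
  have hp0 : 0 < p := lt_of_lt_of_le one_pos hp
  have hs1 : s ≤ 1 := hs.le.trans (sugeno01_le_one μ f A)
  have ht1 : t ≤ 1 := ht.le.trans (sugeno01_le_one μ g A)
  have hst0 : 0 ≤ s * t := mul_nonneg hs0 ht0
  have hst1 : s * t ≤ 1 := mul_le_one₀ hs1 ht0 ht1
  set α₀ : ℝ := (s * t) ^ p with hα₀
  have hα₀0 : 0 ≤ α₀ := Real.rpow_nonneg hst0 p
  have hα₀1 : α₀ ≤ 1 := Real.rpow_le_one hst0 hst1 hp0.le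
  -- α₀ ≤ s * t
  have hα₀st : α₀ ≤ s * t := by
    rcases eq_or_lt_of_le hst0 with h | h
    · rw [hα₀, ← h, Real.zero_rpow hp0.ne']
    · calc α₀ ≤ (s * t) ^ (1:ℝ) :=
            Real.rpow_le_rpow_of_exponent_ge h hst1 hp
        _ = s * t := Real.rpow_one _
  -- level set measures
  have hμs : s < μ (A ∩ {x | s ≤ f x}) :=
    sugeno01_lt_level μ hμmono f hf A hA s hs
  have hμt : t < μ (A ∩ {x | t ≤ g x}) :=
    sugeno01_lt_level μ hμmono g hg A hA t ht
  -- comonotone nesting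
  have hnest : {x | s ≤ f x} ⊆ {x | t ≤ g x} ∨ {x | t ≤ g x} ⊆ {x | s ≤ f x} := by
    by_contra hcon
    push_neg at hcon
    obtain ⟨x, hx1, hx2⟩ := Set.not_subset.mp hcon.1
    obtain ⟨y, hy1, hy2⟩ := Set.not_subset.mp hcon.2
    simp only [Set.mem_setOf_eq, not_le] at hx1 hx2 hy1 hy2
    have := hfg x y
    nlinarith
  -- the intersection has measure above min s t ≥ s*t ≥ α₀
  have hinter : α₀ ≤ μ (A ∩ ({x | s ≤ f x} ∩ {x | t ≤ g x})) := by
    have hmin : min s t ≤ μ (A ∩ ({x | s ≤ f x} ∩ {x | t ≤ g x})) := by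
      rcases hnest with hss | hss
      · have : A ∩ ({x | s ≤ f x} ∩ {x | t ≤ g x}) = A ∩ {x | s ≤ f x} := by
          rw [Set.inter_eq_left.mpr hss]
        rw [this]
        exact le_trans (min_le_left _ _) hμs.le
      · have : A ∩ ({x | s ≤ f x} ∩ {x | t ≤ g x}) = A ∩ {x | t ≤ g x} := by
          rw [Set.inter_eq_right.mpr hss]
        rw [this]
        exact le_trans (min_le_right _ _) hμt.le
    refine le_trans ?_ hmin
    exact hα₀st.trans (le_min (by nlinarith) (by nlinarith))
  -- the intersection sits inside the α₀-level set of f^p g^p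
  have hsub : A ∩ ({x | s ≤ f x} ∩ {x | t ≤ g x}) ⊆
      A ∩ {x | α₀ ≤ f x ^ p * g x ^ p} := by
    rintro x ⟨hxA, hx1, hx2⟩
    refine ⟨hxA, ?_⟩
    simp only [Set.mem_setOf_eq] at hx1 hx2 ⊢
    have h1 : s * t ≤ f x * g x :=
      mul_le_mul hx1 hx2 ht0 (hfY x).1
    calc α₀ ≤ (f x * g x) ^ p := Real.rpow_le_rpow hst0 h1 hp0.le
      _ = f x ^ p * g x ^ p := Real.mul_rpow (hfY x).1 (hgY x).1
  have hμα₀ : α₀ ≤ μ (A ∩ {x | α₀ ≤ f x ^ p * g x ^ p}) := by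
    refine hinter.trans (hμmono _ _ ?_ ?_ hsub)
    · exact hA.inter ((hf measurableSet_Ici).inter (hg measurableSet_Ici))
    · exact hA.inter
        (measurableSet_le measurable_const
          ((hf.pow_const p).mul (hg.pow_const p)))
  -- hence α₀ ≤ the Sugeno integral of f^p g^p
  have hK : α₀ ≤ sugeno01 μ (fun x => f x ^ p * g x ^ p) A := by
    have h := le_ciSup (sugeno01_bdd μ (fun x => f x ^ p * g x ^ p) A)
      ⟨α₀, hα₀0, hα₀1⟩
    unfold sugeno01; simpa [min_eq_left hμα₀] using h
  calc s * t = ((s * t) ^ p) ^ (1/p) := by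
        rw [← Real.rpow_mul hst0, mul_one_div_cancel hp0.ne', Real.rpow_one]
    _ ≤ (sugeno01 μ (fun x => f x ^ p * g x ^ p) A) ^ (1/p) :=
        Real.rpow_le_rpow hα₀0 hK (by positivity)

/-- Carlson type inequality (Xu–Ouyang) for the Sugeno integral of comonotone
functions: `((S)∫_A f dμ)² ((S)∫_A g dμ) ((S)∫_A h dμ) ≤
((S)∫_A f^p g^p dμ)^{1/p} ((S)∫_A f^q h^q dμ)^{1/q}`. -/
theorem carlson_xu_ouyang {X : Type*} [MeasurableSpace X]
    -- μ : F → [0,1] is a monotone measure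
    (μ : Set X → ℝ)
    (hμY : ∀ A : Set X, MeasurableSet A → μ A ∈ Set.Icc (0:ℝ) 1)
    (hμ0 : μ ∅ = 0) (hμX : 0 < μ Set.univ)
    (hμmono : ∀ A B : Set X, MeasurableSet A → MeasurableSet B → A ⊆ B → μ A ≤ μ B)
    -- p, q ≥ 1
    (p q : ℝ) (hp : 1 ≤ p) (hq : 1 ≤ q)
    -- f, g, h : X → [0,1] measurable
    (f g h : X → ℝ) (hf : Measurable f) (hg : Measurable g) (hh : Measurable h)
    (hfY : ∀ x, f x ∈ Set.Icc (0:ℝ) 1) (hgY : ∀ x, g x ∈ Set.Icc (0:ℝ) 1)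
    (hhY : ∀ x, h x ∈ Set.Icc (0:ℝ) 1)
    -- f, g comonotone and f, h comonotone
    (hfg : ∀ x y, 0 ≤ (f x - f y) * (g x - g y))
    (hfh : ∀ x y, 0 ≤ (f x - f y) * (h x - h y))
    (A : Set X) (hA : MeasurableSet A) :
    (sugeno01 μ f A) ^ 2 * sugeno01 μ g A * sugeno01 μ h A ≤
      (sugeno01 μ (fun x => f x ^ p * g x ^ p) A) ^ (1/p) *
      (sugeno01 μ (fun x => f x ^ q * h x ^ q) A) ^ (1/q) := by
  set a := sugeno01 μ f A with ha
  set b := sugeno01 μ g A with hb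
  set c := sugeno01 μ h A with hc
  have ha0 : 0 ≤ a := sugeno01_nonneg μ hμY f hf A hA
  have hb0 : 0 ≤ b := sugeno01_nonneg μ hμY g hg A hA
  have hc0 : 0 ≤ c := sugeno01_nonneg μ hμY h hh A hA
  have hK1 : 0 ≤ sugeno01 μ (fun x => f x ^ p * g x ^ p) A :=
    sugeno01_nonneg μ hμY _ ((hf.pow_const p).mul (hg.pow_const p)) A hA
  have hK2 : 0 ≤ sugeno01 μ (fun x => f x ^ q * h x ^ q) A :=
    sugeno01_nonneg μ hμY _ ((hf.pow_const q).mul (hh.pow_const q)) A hA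
  have hRHS : 0 ≤ (sugeno01 μ (fun x => f x ^ p * g x ^ p) A) ^ (1/p) *
      (sugeno01 μ (fun x => f x ^ q * h x ^ q) A) ^ (1/q) :=
    mul_nonneg (Real.rpow_nonneg hK1 _) (Real.rpow_nonneg hK2 _)
  rcases eq_or_lt_of_le ha0 with ha' | ha'
  · rw [← ha', ]; simpa using hRHS
  rcases eq_or_lt_of_le hb0 with hb' | hb'
  · rw [← hb']; simpa using hRHS
  rcases eq_or_lt_of_le hc0 with hc' | hc'
  · rw [← hc']; simpa using hRHS
  -- a, b, c > 0; approximate from below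
  set m := min a (min b c) with hm
  have hm0 : 0 < m := lt_min ha' (lt_min hb' hc')
  have hmain : ∀ δ ∈ Set.Ioo (0:ℝ) m,
      (a - δ) ^ 2 * (b - δ) * (c - δ) ≤
        (sugeno01 μ (fun x => f x ^ p * g x ^ p) A) ^ (1/p) *
        (sugeno01 μ (fun x => f x ^ q * h x ^ q) A) ^ (1/q) := by
    intro δ hδ
    have hδa : δ < a := lt_of_lt_of_le hδ.2 (min_le_left _ _)
    have hδb : δ < b := lt_of_lt_of_le hδ.2 ((min_le_right _ _).trans (min_le_left _ _))
    have hδc : δ < c := lt_of_lt_of_le hδ.2 ((min_le_right _ _).trans (min_le_right _ _))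
    have h1 : (a - δ) * (b - δ) ≤
        (sugeno01 μ (fun x => f x ^ p * g x ^ p) A) ^ (1/p) :=
      sugeno01_key μ hμY hμmono p hp f g hf hg hfY hgY hfg A hA
        (a - δ) (b - δ) (by linarith) (by linarith)
        (by rw [← ha]; linarith [hδ.1]) (by rw [← hb]; linarith [hδ.1])
    have h2 : (a - δ) * (c - δ) ≤
        (sugeno01 μ (fun x => f x ^ q * h x ^ q) A) ^ (1/q) :=
      sugeno01_key μ hμY hμmono q hq f h hf hh hfY hhY hfh A hA
        (a - δ) (c - δ) (by linarith) (by linarith)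
        (by rw [← ha]; linarith [hδ.1]) (by rw [← hc]; linarith [hδ.1])
    calc (a - δ) ^ 2 * (b - δ) * (c - δ)
        = ((a - δ) * (b - δ)) * ((a - δ) * (c - δ)) := by ring
      _ ≤ _ := mul_le_mul h1 h2 (mul_nonneg (by linarith) (by linarith))
              (Real.rpow_nonneg hK1 _)
  -- pass to the limit δ → 0⁺
  have htend : Filter.Tendsto (fun δ : ℝ => (a - δ) ^ 2 * (b - δ) * (c - δ))
      (nhdsWithin 0 (Set.Ioi 0)) (nhds (a ^ 2 * b * c)) := by
    have hcont : Filter.Tendsto (fun δ : ℝ => (a - δ) ^ 2 * (b - δ) * (c - δ))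
        (nhds 0) (nhds (a ^ 2 * b * c)) := by
      have : Continuous (fun δ : ℝ => (a - δ) ^ 2 * (b - δ) * (c - δ)) := by
        continuity
      have := this.tendsto 0
      simpa using this
    exact hcont.mono_left nhdsWithin_le_nhds
  refine le_of_tendsto htend ?_
  filter_upwards [Ioo_mem_nhdsGT_of_mem (Set.left_mem_Ico.mpr hm0)] with δ hδ
    using hmain δ hδ
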